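/- Let b ≥ 2 and m ≥ 1 be integers. The word t_{b,m} is (purely) periodic, i.e., there exists p ≥ 1 with t(n+p) = t(n) for all n ∈ ℕ, if and only if m divides b − 1. Moreover, if m divides b − 1, then t(n) = n mod m for every n ∈ ℕ (so t is the periodic word (0 1 2 ⋯ (m−1))^ω). -/

import Mathlib

/-- The generalized Thue–Morse word: `t b m n = s_b(n) mod m`, valued in `ZMod m`. -/
def genTM (b m n : ℕ) : ZMod m := ((Nat.digits b n).sum : ZMod m)

lemma sum_digits_mul_add {b : ℕ} (hb : 2 ≤ b) (x r : ℕ) (hr : r < b) :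
    (Nat.digits b (b * x + r)).sum = r + (Nat.digits b x).sum := by
  rcases Nat.eq_zero_or_pos (b * x + r) with h | h
  · have hx : x = 0 := by
      rcases Nat.eq_zero_or_pos x with hx | hx
      · exact hx
      · exfalso; nlinarith
    have hr0 : r = 0 := by omega
    simp [hx, hr0]
  · rw [Nat.digits_def' (by omega : 1 < b) h]
    have h1 : (b * x + r) % b = r := by
      rw [add_comm, Nat.add_mul_mod_self_left]; exact Nat.mod_eq_of_lt hr
    have h2 : (b * x + r) / b = x := by
      rw [Nat.mul_add_div (by omega : 0 < b), Nat.div_eq_of_lt hr, add_zero]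
    rw [h1, h2, List.sum_cons]

lemma sum_digits_key {b : ℕ} (hb : 2 ≤ b) :
    ∀ k q : ℕ, 1 ≤ q → q ≤ b ^ k →
      (Nat.digits b (b ^ k - q)).sum + (Nat.digits b (q - 1)).sum = k * (b - 1) := by
  intro k
  induction k with
  | zero =>
    intro q h1 h2
    have : q = 1 := by simpa using le_antisymm h2 h1
    simp [this]
  | succ k ih =>
    intro q h1 h2
    obtain ⟨u, r, hrb, hqur⟩ : ∃ u r, r < b ∧ b * u + r = q - 1 :=
      ⟨(q - 1) / b, (q - 1) % b, Nat.mod_lt _ (by omega), Nat.div_add_mod _ _⟩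
    have hpow : b ^ (k + 1) = b * b ^ k := by ring
    have h2' : q ≤ b * b ^ k := by rw [← hpow]; exact h2
    have huB : u + 1 ≤ b ^ k := by
      have hlt : b * u < b * b ^ k := by omega
      exact Nat.lt_of_mul_lt_mul_left hlt
    have hsplit : b ^ (k + 1) - q = b * (b ^ k - (u + 1)) + (b - 1 - r) := by
      zify [h2, huB, (by omega : r ≤ b - 1), (by omega : 1 ≤ b), hpow.le]
      have hq' : (b : ℤ) * u + r = (q : ℤ) - 1 := by
        have := hqur
        zify [h1] at this
        linarith
      ring_nf
      ring_nf at hq'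
      linarith
    have hsum1 : (Nat.digits b (b ^ (k + 1) - q)).sum
        = (b - 1 - r) + (Nat.digits b (b ^ k - (u + 1))).sum := by
      rw [hsplit]
      exact sum_digits_mul_add hb _ _ (by omega)
    have hsum2 : (Nat.digits b (q - 1)).sum = r + (Nat.digits b u).sum := by
      rw [← hqur]
      exact sum_digits_mul_add hb _ _ hrb
    have hih := ih (u + 1) (by omega) huB
    simp only [Nat.add_sub_cancel] at hih
    have hexp : (k + 1) * (b - 1) = k * (b - 1) + (b - 1) := by ring
    rw [hsum1, hsum2, hexp, ← hih]
    omega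

lemma genTM_eq_cast {b m : ℕ} (hb : 2 ≤ b) (hdvd : m ∣ (b - 1)) (n : ℕ) :
    genTM b m n = (n : ZMod m) := by
  rcases Nat.eq_zero_or_pos m with hm0 | hm0
  · subst hm0
    simp only [Nat.zero_dvd] at hdvd
    omega
  rcases eq_or_lt_of_le (Nat.succ_le_of_lt hm0) with hm1 | hm2
  · have : m = 1 := hm1.symm
    subst this
    exact Subsingleton.elim _ _
  · obtain ⟨c, hc⟩ := hdvd
    have hbm : b % m = 1 := by
      have hb1 : b = m * c + 1 := by omega
      rw [hb1, Nat.mul_add_mod, Nat.mod_eq_of_lt hm2]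
    have := Nat.modEq_digits_sum m b hbm n
    unfold genTM
    exact ((ZMod.natCast_eq_natCast_iff _ _ _).mpr this).symm

theorem genTM_periodic_iff (b m : ℕ) (hb : 2 ≤ b) (hm : 1 ≤ m) :
    ((∃ p : ℕ, 1 ≤ p ∧ ∀ n : ℕ, genTM b m (n + p) = genTM b m n) ↔ m ∣ (b - 1)) ∧
    (m ∣ (b - 1) → ∀ n : ℕ, genTM b m n = (n : ZMod m)) := by
  constructor
  · constructor
    · rintro ⟨p, hp, hper⟩
      -- key: evaluate at b^k - p for k = p and k = p + 1
      have hshift : ∀ x : ℕ, genTM b m (b * x) = genTM b m x := by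
        intro x
        have := sum_digits_mul_add hb x 0 (by omega)
        unfold genTM
        rw [Nat.add_zero] at this
        rw [this, Nat.zero_add]
      have hkey : ∀ k : ℕ, p ≤ b ^ k →
          genTM b m (b ^ k) + ((Nat.digits b (p - 1)).sum : ZMod m)
            = ((k * (b - 1) : ℕ) : ZMod m) := by
        intro k hk
        have h1 := sum_digits_key hb k p hp hk
        have h2 : genTM b m (b ^ k - p) = genTM b m (b ^ k) := by
          have := hper (b ^ k - p)
          rw [Nat.sub_add_cancel hk] at this
          exact this.symm
        rw [← h2]
        unfold genTM
        exact_mod_cast congrArg (fun x : ℕ => (x : ZMod m)) h1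
      have hpk : p ≤ b ^ p := (Nat.lt_pow_self (by omega : 1 < b) : p < b ^ p).le
      have hpk1 : p ≤ b ^ (p + 1) := hpk.trans (Nat.pow_le_pow_right (by omega) (by omega))
      have e1 := hkey p hpk
      have e2 := hkey (p + 1) hpk1
      have hsame : genTM b m (b ^ (p + 1)) = genTM b m (b ^ p) := by
        rw [pow_succ, mul_comm]
        exact hshift _
      rw [hsame, e1] at e2
      have : (((p + 1) * (b - 1) : ℕ) : ZMod m) - ((p * (b - 1) : ℕ) : ZMod m) = 0 := by
        rw [← e2]; ring
      have hb1 : ((b - 1 : ℕ) : ZMod m) = 0 := by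
        have hnat : (p + 1) * (b - 1) = p * (b - 1) + (b - 1) := by ring
        rw [hnat] at this
        push_cast at this ⊢
        rw [add_sub_right_comm, sub_self, zero_add] at this
        exact this
      haveI : NeZero m := ⟨by omega⟩
      exact (ZMod.natCast_eq_zero_iff _ _).mp hb1
    · intro hdvd
      refine ⟨m, hm, fun n => ?_⟩
      rw [genTM_eq_cast hb hdvd, genTM_eq_cast hb hdvd]
      push_cast
      simp
  · intro hdvd n
    exact genTM_eq_cast hb hdvd n
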